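/- Let σ = (σ_0,…,σ_n) be a changemaker vector and let x be a positive integer. Then T^σ_m = xp, where m = (x²p + x|σ|₁)/2 (an integer since p ≡ |σ|₁ mod 2). Equivalently, xp is the greatest element of the set {σ·α : α ∈ ℤ_{≥0}^{n+1}, Σ_j α_j(α_j+1) ≤ x²p + x|σ|₁}. -/
import Mathlib


open Finset

/-- `σ` is a changemaker vector: all entries are positive and every integer `k` with
`0 ≤ k ≤ σ_0 + ⋯ + σ_n` is the sum of a subset of the entries. -/
def IsChangemaker {n : ℕ} (σ : Fin (n + 1) → ℕ) : Prop :=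
  (∀ i, 0 < σ i) ∧
    ∀ k : ℕ, k ≤ ∑ i, σ i → ∃ A : Finset (Fin (n + 1)), ∑ i ∈ A, σ i = k

/-- `Tcm σ m = T^σ_m`, the maximum of `σ·α` over all `α ∈ ℤ_{≥0}^{n+1}` with
`Σ_j α_j (α_j + 1) ≤ 2m` (the maximum exists: the set is nonempty and bounded). -/
noncomputable def Tcm {n : ℕ} (σ : Fin (n + 1) → ℕ) (m : ℕ) : ℕ :=
  sSup {t : ℕ | ∃ α : Fin (n + 1) → ℕ,
    (∑ j, α j * (α j + 1)) ≤ 2 * m ∧ t = ∑ j, σ j * α j}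

/-- `Vcm σ i = V^σ_i`, the `i`-th relevant coefficient of `σ`:
the least `m` with `T^σ_m ≥ i` (and `V^σ_0 = 0`). -/
noncomputable def Vcm {n : ℕ} (σ : Fin (n + 1) → ℕ) (i : ℕ) : ℕ :=
  sInf {m : ℕ | i ≤ Tcm σ m}

lemma int_mul_succ_nonneg (t : ℤ) : 0 ≤ t * (t + 1) := by
  rcases le_or_gt 0 t with h | h
  · nlinarith
  · nlinarith

theorem stmt_0 {n : ℕ} (σ : Fin (n + 1) → ℕ) (hσ : IsChangemaker σ)
    (x : ℕ) (hx : 0 < x) (m : ℕ)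
    (hm : 2 * m = x ^ 2 * (∑ i, (σ i) ^ 2) + x * (∑ i, σ i)) :
    Tcm σ m = x * (∑ i, (σ i) ^ 2) := by
  set p := ∑ i, (σ i) ^ 2 with hp
  set S := {t : ℕ | ∃ α : Fin (n + 1) → ℕ,
    (∑ j, α j * (α j + 1)) ≤ 2 * m ∧ t = ∑ j, σ j * α j} with hS
  have hmem : x * p ∈ S := by
    refine ⟨fun j => x * σ j, ?_, ?_⟩
    · have : ∑ j, (x * σ j) * (x * σ j + 1) = x ^ 2 * p + x * ∑ i, σ i := by
        rw [hp, Finset.mul_sum, Finset.mul_sum, ← Finset.sum_add_distrib]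
        exact Finset.sum_congr rfl fun j _ => by ring
      rw [this, hm]
    · rw [hp, Finset.mul_sum]
      exact Finset.sum_congr rfl fun j _ => by ring
  have hub : ∀ t ∈ S, t ≤ x * p := by
    rintro t ⟨α, h1, rfl⟩
    have key : ∀ j : Fin (n + 1),
        2 * (x : ℤ) * (σ j * α j) + x * σ j ≤ α j * (α j + 1) + x ^ 2 * (σ j) ^ 2 := by
      intro j
      have h := int_mul_succ_nonneg ((α j : ℤ) - x * σ j)
      nlinarith
    have hsum : 2 * (x : ℤ) * (∑ j, (σ j : ℤ) * α j) + x * (∑ i, (σ i : ℤ)) ≤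
        (∑ j, (α j : ℤ) * (α j + 1)) + x ^ 2 * (∑ i, ((σ i : ℤ)) ^ 2) := by
      rw [Finset.mul_sum, Finset.mul_sum, Finset.mul_sum, ← Finset.sum_add_distrib,
        ← Finset.sum_add_distrib]
      exact Finset.sum_le_sum fun j _ => key j
    have h1' : (∑ j, (α j : ℤ) * (α j + 1)) ≤ (x : ℤ) ^ 2 * (∑ i, ((σ i : ℤ)) ^ 2)
        + x * (∑ i, (σ i : ℤ)) := by
      have := h1
      have hc : ((∑ j, α j * (α j + 1) : ℕ) : ℤ) ≤ ((2 * m : ℕ) : ℤ) := by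
        exact_mod_cast this
      push_cast at hc
      calc (∑ j, (α j : ℤ) * (α j + 1)) ≤ 2 * (m : ℤ) := hc
        _ = (x : ℤ) ^ 2 * (∑ i, ((σ i : ℤ)) ^ 2) + x * (∑ i, (σ i : ℤ)) := by
            have hmz : (2 * (m : ℤ)) = (x : ℤ) ^ 2 * (∑ i, ((σ i : ℤ)) ^ 2)
                + x * ∑ i, (σ i : ℤ) := by
              have := hm
              rw [hp] at this
              exact_mod_cast this
            linarith [hmz]
    have h2 : 2 * (x : ℤ) * (∑ j, (σ j : ℤ) * α j) ≤ 2 * x * (x * ∑ i, ((σ i : ℤ)) ^ 2) := by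
      nlinarith
    have hxz : (0 : ℤ) < 2 * x := by positivity
    have h3 : (∑ j, (σ j : ℤ) * α j) ≤ x * ∑ i, ((σ i : ℤ)) ^ 2 :=
      le_of_mul_le_mul_left (by linarith [h2]) hxz
    have : ((∑ j, σ j * α j : ℕ) : ℤ) ≤ ((x * p : ℕ) : ℤ) := by
      push_cast [hp]
      convert h3 using 2
    exact_mod_cast this
  have hbdd : BddAbove S := ⟨x * p, fun t ht => hub t ht⟩
  exact le_antisymm (csSup_le ⟨x * p, hmem⟩ hub) (le_csSup hbdd hmem)
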